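/- Additive outcome model kills the transport bias (Proposition 2): suppose additionally that Y^(a,g) = W₀ + W₁(a) + W₂(g) + ε_{a,g} for all a ∈ {0,1} and g ∈ {0,…,g_max}, where W₀, W₁(0), W₁(1), W₂(0), …, W₂(g_max) are square-integrable random variables measurable with respect to a σ-algebra 𝓒 of covariate information with 𝓗 ⊆ 𝓒, and each noise term ε_{a,g} has mean zero and zero covariance with every bounded 𝓒-measurable random variable. Then φ₁ = φ₂ (equivalently T₃ = 0, so the bias of the naive estimator for φ₂ equals its bias for φ₁). -/

import Mathlib

open MeasureTheory ProbabilityTheory Set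
open scoped ENNReal NNReal

/-- The indicator function of a set, as a real-valued random variable. -/
noncomputable def ind {Ω : Type*} (s : Set Ω) : Ω → ℝ := s.indicator fun _ => 1

/-- The covariance of two real random variables, `Cov(f,g) = E[f·g] − E[f]·E[g]`. -/
noncomputable def cov {Ω : Type*} {m : MeasurableSpace Ω} (μ : MeasureTheory.Measure Ω)
    (f g : Ω → ℝ) : ℝ :=
  (∫ ω, f ω * g ω ∂μ) - (∫ ω, f ω ∂μ) * ∫ ω, g ω ∂μ

lemma ind_nonneg {Ω : Type*} (s : Set Ω) (ω : Ω) : 0 ≤ ind s ω :=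
  Set.indicator_nonneg (fun _ _ => zero_le_one) ω

lemma ind_le_one {Ω : Type*} (s : Set Ω) (ω : Ω) : ind s ω ≤ 1 := by
  by_cases h : ω ∈ s <;> simp [ind, h]

lemma integrable_ind {Ω : Type*} [mΩ : MeasurableSpace Ω] {μ : Measure Ω} [IsFiniteMeasure μ]
    {s : Set Ω} (hs : MeasurableSet s) : Integrable (ind s) μ :=
  (integrable_const (1 : ℝ)).indicator hs

/-- An a.e.-`[0,1]`-valued measurable function times an integrable function is integrable. -/
lemma integrable_mul_aebdd {Ω : Type*} [mΩ : MeasurableSpace Ω] {μ : Measure Ω}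
    {κ f : Ω → ℝ} (hκmeas : Measurable[mΩ] κ) (hκ0 : 0 ≤ᵐ[μ] κ) (hκ1 : κ ≤ᵐ[μ] fun _ => 1)
    (hf : Integrable f μ) : Integrable (fun ω => κ ω * f ω) μ := by
  refine Integrable.mono' hf.abs (hκmeas.aestronglyMeasurable.mul hf.1) ?_
  filter_upwards [hκ0, hκ1] with ω h0 h1
  rw [Real.norm_eq_abs, abs_mul]
  calc |κ ω| * |f ω| ≤ 1 * |f ω| := by
        refine mul_le_mul_of_nonneg_right ?_ (abs_nonneg _)
        rw [abs_of_nonneg h0]; exact h1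
    _ = |f ω| := one_mul _

/-- Key conditional-independence step: for `B = Z⁻¹ t`,
`∫_B f = ∫ f ⋅ E[1_B | mH]`. -/
lemma key_setIntegral {Ω γ : Type*} [mΩ : MeasurableSpace Ω] [StandardBorelSpace Ω]
    [MeasurableSpace γ]
    (μ : Measure Ω) [IsProbabilityMeasure μ]
    {mH : MeasurableSpace Ω} (hH : mH ≤ mΩ)
    {Z : Ω → γ} (hZ : Measurable[mΩ] Z)
    {f : Ω → ℝ} (hf : Measurable[mΩ] f)
    (hci : CondIndepFun mH hH f Z μ)
    {t : Set γ} (ht : MeasurableSet t) :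
    ∫ ω in Z ⁻¹' t, f ω ∂μ
      = ∫ ω, f ω * (μ[ind (Z ⁻¹' t) | mH]) ω ∂μ := by
  letI : MeasurableSpace Ω := mΩ
  set κ : Ω → ℝ := μ[ind (Z ⁻¹' t) | mH] with hκdef
  have hB : MeasurableSet[mΩ] (Z ⁻¹' t) := hZ ht
  have hκSM : StronglyMeasurable[mH] κ := stronglyMeasurable_condExp
  have hκmeas : Measurable[mΩ] κ := (hκSM.mono hH).measurable
  have hκ0 : 0 ≤ᵐ[μ] κ :=
    condExp_nonneg (Filter.Eventually.of_forall fun ω => ind_nonneg _ ω)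
  -- the measure identity on `comap f`-measurable sets
  have hset : ∀ s : Set ℝ, MeasurableSet s →
      μ (f ⁻¹' s ∩ Z ⁻¹' t) = ∫⁻ ω in f ⁻¹' s, ENNReal.ofReal (κ ω) ∂μ := by
    intro s hs
    have hA : MeasurableSet[mΩ] (f ⁻¹' s) := hf hs
    have hcondeq := (condIndepFun_iff_condExp_inter_preimage_eq_mul (m' := mH) (mΩ := mΩ)
        (hm' := hH) (μ := μ) hf hZ).mp hci s t hs ht
    have hintA : Integrable (ind (f ⁻¹' s)) μ := integrable_ind hA
    have hintκA : Integrable (κ * ind (f ⁻¹' s)) μ := by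
      have := (integrable_condExp (μ := μ) (f := ind (Z ⁻¹' t)) (m := mH)).bdd_mul
        ((measurable_const.indicator hA : Measurable[mΩ] (ind (f ⁻¹' s)))).aestronglyMeasurable
        (c := 1) (Filter.Eventually.of_forall fun ω => by by_cases h : ω ∈ f ⁻¹' s <;> simp [ind, h])
      have heq : (κ * ind (f ⁻¹' s)) = fun ω => ind (f ⁻¹' s) ω * κ ω := by
        funext ω; simp [mul_comm]
      rw [heq]; exact this
    have hmul := condExp_mul_of_stronglyMeasurable_left hκSM hintκA hintA
    have hreal : (μ (f ⁻¹' s ∩ Z ⁻¹' t)).toReal = ∫ ω in f ⁻¹' s, κ ω ∂μ := by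
      calc (μ (f ⁻¹' s ∩ Z ⁻¹' t)).toReal
          = ∫ ω, ind (f ⁻¹' s ∩ Z ⁻¹' t) ω ∂μ := (integral_indicator_one (hA.inter hB)).symm
        _ = ∫ ω, (μ[ind (f ⁻¹' s ∩ Z ⁻¹' t) | mH]) ω ∂μ := (integral_condExp hH).symm
        _ = ∫ ω, (μ[ind (f ⁻¹' s) | mH]) ω * κ ω ∂μ := integral_congr_ae hcondeq
        _ = ∫ ω, (κ * (μ[ind (f ⁻¹' s) | mH])) ω ∂μ := by
            refine integral_congr_ae (Filter.Eventually.of_forall fun ω => ?_)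
            simp [mul_comm]
        _ = ∫ ω, (μ[κ * ind (f ⁻¹' s) | mH]) ω ∂μ := (integral_congr_ae hmul).symm
        _ = ∫ ω, (κ * ind (f ⁻¹' s)) ω ∂μ := integral_condExp hH
        _ = ∫ ω in f ⁻¹' s, κ ω ∂μ := by
            rw [← integral_indicator hA]
            refine integral_congr_ae (Filter.Eventually.of_forall fun ω => ?_)
            by_cases h : ω ∈ f ⁻¹' s <;> simp [ind, h]
    calc μ (f ⁻¹' s ∩ Z ⁻¹' t)
        = ENNReal.ofReal ((μ (f ⁻¹' s ∩ Z ⁻¹' t)).toReal) :=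
          (ENNReal.ofReal_toReal (measure_ne_top μ _)).symm
      _ = ENNReal.ofReal (∫ ω in f ⁻¹' s, κ ω ∂μ) := by rw [hreal]
      _ = ∫⁻ ω in f ⁻¹' s, ENNReal.ofReal (κ ω) ∂μ :=
          ofReal_integral_eq_lintegral_ofReal integrable_condExp.integrableOn
            (ae_restrict_of_ae hκ0)
  -- trim the two measures to `comap f`
  set m₁ : MeasurableSpace Ω := MeasurableSpace.comap f inferInstance with hm₁def
  letI : MeasurableSpace Ω := mΩ
  have hm₁ : m₁ ≤ mΩ := hf.comap_le
  have hfm₁ : StronglyMeasurable[m₁] f :=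
    (Measurable.stronglyMeasurable (fun s hs => ⟨s, hs, rfl⟩))
  have htrim : (μ.restrict (Z ⁻¹' t)).trim hm₁
      = (μ.withDensity fun ω => ENNReal.ofReal (κ ω)).trim hm₁ := by
    refine @Measure.ext Ω m₁ _ _ (fun A hA => ?_)
    obtain ⟨s, hs, rfl⟩ := hA
    have h1 : (μ.restrict (Z ⁻¹' t)) (f ⁻¹' s) = μ (f ⁻¹' s ∩ Z ⁻¹' t) :=
      Measure.restrict_apply (hf hs)
    have h2 : (μ.withDensity fun ω => ENNReal.ofReal (κ ω)) (f ⁻¹' s)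
        = ∫⁻ ω in f ⁻¹' s, ENNReal.ofReal (κ ω) ∂μ := withDensity_apply _ (hf hs)
    rw [trim_measurableSet_eq hm₁ ⟨s, hs, rfl⟩, trim_measurableSet_eq hm₁ ⟨s, hs, rfl⟩,
      h1, h2]
    exact hset s hs
  calc ∫ ω in Z ⁻¹' t, f ω ∂μ
      = ∫ ω, f ω ∂((μ.restrict (Z ⁻¹' t)).trim hm₁) := integral_trim hm₁ hfm₁
    _ = ∫ ω, f ω ∂((μ.withDensity fun ω => ENNReal.ofReal (κ ω)).trim hm₁) := by rw [htrim]
    _ = ∫ ω, f ω ∂(μ.withDensity fun ω => ENNReal.ofReal (κ ω)) := (integral_trim hm₁ hfm₁).symm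
    _ = ∫ ω, f ω * κ ω ∂μ := by
        rw [show (fun ω => ENNReal.ofReal (κ ω))
            = (fun ω => ((Real.toNNReal (κ ω) : ℝ≥0) : ℝ≥0∞)) from rfl,
          integral_withDensity_eq_integral_smul (μ := μ) hκmeas.real_toNNReal f]
        refine integral_congr_ae ?_
        filter_upwards [hκ0] with ω h0
        simp [NNReal.smul_def, Real.coe_toNNReal _ h0, mul_comm]

/-- **Additive outcome model kills the transport bias (Proposition 2).**  Suppose that,
in addition to the transportability assumptions,
`Y^(a,g) = W₀ + W₁(a) + W₂(g) + ε_{a,g}`, where `W₀, W₁(a), W₂(g)` are square-integrable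
random variables measurable with respect to a σ-algebra `𝓒` of covariate information with
`𝓗 ⊆ 𝓒`, and each noise term `ε_{a,g}` has mean zero and zero covariance with every bounded
`𝓒`-measurable random variable.  Then `φ₁ = φ₂` (equivalently `T₃ = 0`, so the bias of the
naive estimator for `φ₂` equals its bias for `φ₁`). -/
theorem additive_model_no_transport_bias
    {Ω : Type*} [mΩ : MeasurableSpace Ω] [StandardBorelSpace Ω] [Nonempty Ω]
    (μ : Measure Ω) [IsProbabilityMeasure μ]
    (gmax : ℕ)
    (S A G : Ω → ℕ)
    (hS : ∀ ω, S ω = 1 ∨ S ω = 2) (hSmeas : Measurable S)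
    (hSpos : ∀ s, (s = 1 ∨ s = 2) → 0 < μ {ω | S ω = s})
    (hA : ∀ ω, A ω ≤ 1) (hG : ∀ ω, G ω ≤ gmax)
    (hAmeas : Measurable A) (hGmeas : Measurable G)
    (Ypo : ℕ → ℕ → Ω → ℝ)
    (hYpomeas : ∀ a ≤ 1, ∀ g ≤ gmax, Measurable (Ypo a g))
    (hYposq : ∀ a ≤ 1, ∀ g ≤ gmax, MemLp (Ypo a g) 2 μ)
    (Ya : ℕ → Ω → ℝ)
    (hYa : ∀ a ω, Ya a ω = ∑ g ∈ Finset.range (gmax + 1), ind {ω' | G ω' = g} ω * Ypo a g ω)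
    (Y : Ω → ℝ)
    (hY : ∀ ω, Y ω = ind {ω' | A ω' = 1} ω * Ya 1 ω + ind {ω' | A ω' = 0} ω * Ya 0 ω)
    (mH : MeasurableSpace Ω) (hH : mH ≤ mΩ)
    (pg : ℕ → ℕ → Ω → ℝ)
    (hpg : ∀ s g, pg s g = (μ[|{ω | S ω = s}])[ind {ω | G ω = g} | mH])
    (hpgbdd : ∀ s g, ∀ᵐ ω ∂μ, 0 ≤ pg s g ω ∧ pg s g ω ≤ 1)
    (hpgmeas : ∀ s g, Measurable[mH] (pg s g))
    (htrans : ∀ a ≤ 1, ∀ g ≤ gmax,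
      CondIndepFun mH hH (Ypo a g) (fun ω => (S ω, G ω)) μ)
    (hSH : Indep (MeasurableSpace.comap S inferInstance) mH μ)
    -- the additive outcome generating model
    (mC : MeasurableSpace Ω) (hHC : mH ≤ mC) (hC : mC ≤ mΩ)
    (W0 : Ω → ℝ) (W1 W2 : ℕ → Ω → ℝ) (noise : ℕ → ℕ → Ω → ℝ)
    (hW0meas : Measurable[mC] W0)
    (hW1meas : ∀ a ≤ 1, Measurable[mC] (W1 a))
    (hW2meas : ∀ g ≤ gmax, Measurable[mC] (W2 g))
    (hW0sq : MemLp W0 2 μ)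
    (hW1sq : ∀ a ≤ 1, MemLp (W1 a) 2 μ)
    (hW2sq : ∀ g ≤ gmax, MemLp (W2 g) 2 μ)
    (hmodel : ∀ a ≤ 1, ∀ g ≤ gmax, ∀ ω,
      Ypo a g ω = W0 ω + W1 a ω + W2 g ω + noise a g ω)
    (hnoise_mean : ∀ a ≤ 1, ∀ g ≤ gmax, ∫ ω, noise a g ω ∂μ = 0)
    (hnoise_uncorr : ∀ a ≤ 1, ∀ g ≤ gmax, ∀ h : Ω → ℝ, Measurable[mC] h →
      (∃ c : ℝ, ∀ ω, |h ω| ≤ c) → cov μ (noise a g) h = 0) :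
    ∫ ω, (Ya 1 ω - Ya 0 ω) ∂(μ[|{ω | S ω = 1}])
      = ∫ ω, (Ya 1 ω - Ya 0 ω) ∂(μ[|{ω | S ω = 2}]) := by
  letI : MeasurableSpace Ω := mΩ
  -- basic integrability facts
  have hYint : ∀ a, a ≤ 1 → ∀ g, g ≤ gmax → Integrable (Ypo a g) μ :=
    fun a ha g hg => (hYposq a ha g hg).integrable one_le_two
  have hW0int : Integrable W0 μ := hW0sq.integrable one_le_two
  have hW1int : ∀ a, a ≤ 1 → Integrable (W1 a) μ := fun a ha => (hW1sq a ha).integrable one_le_two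
  have hW2int : ∀ g, g ≤ gmax → Integrable (W2 g) μ := fun g hg => (hW2sq g hg).integrable one_le_two
  have hnoiseint : ∀ a, a ≤ 1 → ∀ g, g ≤ gmax → Integrable (noise a g) μ := by
    intro a ha g hg
    have heq : noise a g = fun ω => Ypo a g ω - W0 ω - W1 a ω - W2 g ω := by
      funext ω; have := hmodel a ha g hg ω; linarith
    rw [heq]
    exact (((hYint a ha g hg).sub hW0int).sub (hW1int a ha)).sub (hW2int g hg)
  -- the conditional expectation of the noise given 𝓗 vanishes
  have hnoise_condexp : ∀ a, a ≤ 1 → ∀ g, g ≤ gmax → μ[noise a g|mH] =ᵐ[μ] 0 := by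
    intro a ha g hg
    refine (ae_eq_condExp_of_forall_setIntegral_eq hH (hnoiseint a ha g hg)
      (fun u _ _ => (integrable_zero _ _ _).integrableOn)
      (fun u hu _ => ?_) (stronglyMeasurable_const.aestronglyMeasurable)).symm
    have humeas : MeasurableSet[mΩ] u := hH u hu
    have hcov := hnoise_uncorr a ha g hg (ind u)
      ((measurable_const.indicator (hHC u hu) : Measurable[mC] (ind u)))
      ⟨1, fun ω => by by_cases h : ω ∈ u <;> simp [ind, h]⟩
    rw [cov, hnoise_mean a ha g hg, zero_mul, sub_zero] at hcov
    have : ∫ ω in u, noise a g ω ∂μ = ∫ ω, noise a g ω * ind u ω ∂μ := by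
      rw [← integral_indicator humeas]
      refine integral_congr_ae (Filter.Eventually.of_forall fun ω => ?_)
      by_cases h : ω ∈ u <;> simp [ind, h]
    simp only [Pi.zero_apply]
    rw [integral_zero, this, hcov]
  -- main identity for each population
  have main : ∀ s : ℕ, ∫ ω in {ω | S ω = s}, (Ya 1 ω - Ya 0 ω) ∂μ
      = (μ {ω | S ω = s}).toReal * ∫ ω, (W1 1 ω - W1 0 ω) ∂μ := by
    intro s
    have hZ : Measurable[mΩ] (fun ω => (S ω, G ω)) := hSmeas.prodMk hGmeas
    have hBmeas : ∀ g : ℕ, MeasurableSet[mΩ] ((fun ω => (S ω, G ω)) ⁻¹' {(s, g)}) :=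
      fun g => hZ (measurableSet_singleton _)
    have hGset : ∀ g : ℕ, MeasurableSet[mΩ] {ω | G ω = g} :=
      fun g => hGmeas (measurableSet_singleton g)
    have hSset : MeasurableSet[mΩ] {ω | S ω = s} := hSmeas (measurableSet_singleton s)
    have hBeq : ∀ g : ℕ, ((fun ω => (S ω, G ω)) ⁻¹' {(s, g)})
        = {ω | S ω = s} ∩ {ω | G ω = g} := by
      intro g; ext ω
      simp [Set.mem_preimage, Set.mem_singleton_iff, Prod.ext_iff, Set.mem_inter_iff,
        Set.mem_setOf_eq]
    -- facts about κ g := E[1_{B g} | mH]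
    have hκSM : ∀ g : ℕ, StronglyMeasurable[mH]
        (μ[ind ((fun ω => (S ω, G ω)) ⁻¹' {(s, g)})|mH]) := fun g => stronglyMeasurable_condExp
    have hκmeas : ∀ g : ℕ, Measurable[mΩ]
        (μ[ind ((fun ω => (S ω, G ω)) ⁻¹' {(s, g)})|mH]) := fun g => ((hκSM g).mono hH).measurable
    have hκ0 : ∀ g : ℕ, 0 ≤ᵐ[μ] (μ[ind ((fun ω => (S ω, G ω)) ⁻¹' {(s, g)})|mH]) :=
      fun g => condExp_nonneg (Filter.Eventually.of_forall fun ω => ind_nonneg _ ω)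
    have hκ1 : ∀ g : ℕ, (μ[ind ((fun ω => (S ω, G ω)) ⁻¹' {(s, g)})|mH]) ≤ᵐ[μ]
        fun _ => (1 : ℝ) := by
      intro g
      have h1 := condExp_mono (μ := μ) (m := mH) (integrable_ind (hBmeas g))
        (integrable_const (1 : ℝ)) (Filter.Eventually.of_forall fun ω => ind_le_one _ ω)
      rwa [condExp_const hH (1 : ℝ)] at h1
    have hm_int : Integrable (μ[fun ω => W1 1 ω - W1 0 ω|mH]) μ := integrable_condExp
    -- conditional expectation of potential outcomes given 𝓗
    have hE : ∀ a, a ≤ 1 → ∀ g, g ≤ gmax → μ[Ypo a g|mH] =ᵐ[μ]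
        fun ω => (μ[W0|mH]) ω + (μ[W1 a|mH]) ω + (μ[W2 g|mH]) ω := by
      intro a ha g hg
      have hmod : Ypo a g = (fun ω => W0 ω + W1 a ω + W2 g ω) + noise a g :=
        funext fun ω => hmodel a ha g hg ω
      have h2 : μ[Ypo a g|mH] =ᵐ[μ]
          μ[fun ω => W0 ω + W1 a ω + W2 g ω|mH] + μ[noise a g|mH] := by
        rw [hmod]
        exact condExp_add ((hW0int.add (hW1int a ha)).add (hW2int g hg)) (hnoiseint a ha g hg) mH
      have h3 : μ[fun ω => W0 ω + W1 a ω + W2 g ω|mH] =ᵐ[μ]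
          μ[fun ω => W0 ω + W1 a ω|mH] + μ[W2 g|mH] :=
        condExp_add (hW0int.add (hW1int a ha)) (hW2int g hg) mH
      have h4 : μ[fun ω => W0 ω + W1 a ω|mH] =ᵐ[μ] μ[W0|mH] + μ[W1 a|mH] :=
        condExp_add hW0int (hW1int a ha) mH
      filter_upwards [h2, h3, h4, hnoise_condexp a ha g hg] with ω e2 e3 e4 e5
      simp only [Pi.add_apply, Pi.zero_apply] at e2 e3 e4 e5
      rw [e2, e3, e4, e5]; ring
    -- key step: per-neighborhood-value integrals
    have hkey : ∀ g, g ≤ gmax →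
        ∫ ω in ((fun ω => (S ω, G ω)) ⁻¹' {(s, g)}), (Ypo 1 g ω - Ypo 0 g ω) ∂μ
          = ∫ ω, (μ[ind ((fun ω => (S ω, G ω)) ⁻¹' {(s, g)})|mH]) ω
              * (μ[fun ω => W1 1 ω - W1 0 ω|mH]) ω ∂μ := by
      intro g hg
      have h1 := key_setIntegral μ hH hZ (hYpomeas 1 le_rfl g hg)
        (htrans 1 le_rfl g hg) (measurableSet_singleton ((s : ℕ), (g : ℕ)))
      have h0 := key_setIntegral μ hH hZ (hYpomeas 0 (by norm_num) g hg)
        (htrans 0 (by norm_num) g hg) (measurableSet_singleton ((s : ℕ), (g : ℕ)))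
      have hma : ∀ a, a ≤ 1 →
          ∫ ω, Ypo a g ω * (μ[ind ((fun ω => (S ω, G ω)) ⁻¹' {(s, g)})|mH]) ω ∂μ
            = ∫ ω, (μ[ind ((fun ω => (S ω, G ω)) ⁻¹' {(s, g)})|mH]) ω
                * (μ[Ypo a g|mH]) ω ∂μ := by
        intro a ha
        have hprod : Integrable ((μ[ind ((fun ω => (S ω, G ω)) ⁻¹' {(s, g)})|mH])
            * Ypo a g) μ :=
          integrable_mul_aebdd (hκmeas g) (hκ0 g) (hκ1 g) (hYint a ha g hg)
        have hmul := condExp_mul_of_stronglyMeasurable_left (hκSM g) hprod (hYint a ha g hg)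
        calc ∫ ω, Ypo a g ω * (μ[ind ((fun ω => (S ω, G ω)) ⁻¹' {(s, g)})|mH]) ω ∂μ
            = ∫ ω, ((μ[ind ((fun ω => (S ω, G ω)) ⁻¹' {(s, g)})|mH]) * Ypo a g) ω ∂μ :=
              integral_congr_ae (Filter.Eventually.of_forall fun ω => mul_comm _ _)
          _ = ∫ ω, (μ[(μ[ind ((fun ω => (S ω, G ω)) ⁻¹' {(s, g)})|mH]) * Ypo a g|mH]) ω ∂μ :=
              (integral_condExp hH).symm
          _ = ∫ ω, ((μ[ind ((fun ω => (S ω, G ω)) ⁻¹' {(s, g)})|mH]) * μ[Ypo a g|mH]) ω ∂μ :=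
              integral_congr_ae hmul
          _ = ∫ ω, (μ[ind ((fun ω => (S ω, G ω)) ⁻¹' {(s, g)})|mH]) ω * (μ[Ypo a g|mH]) ω ∂μ :=
              rfl
      have hint1 : Integrable (fun ω => (μ[ind ((fun ω => (S ω, G ω)) ⁻¹' {(s, g)})|mH]) ω
          * (μ[Ypo 1 g|mH]) ω) μ :=
        integrable_mul_aebdd (hκmeas g) (hκ0 g) (hκ1 g) integrable_condExp
      have hint0 : Integrable (fun ω => (μ[ind ((fun ω => (S ω, G ω)) ⁻¹' {(s, g)})|mH]) ω
          * (μ[Ypo 0 g|mH]) ω) μ :=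
        integrable_mul_aebdd (hκmeas g) (hκ0 g) (hκ1 g) integrable_condExp
      have hmsub : μ[fun ω => W1 1 ω - W1 0 ω|mH] =ᵐ[μ] μ[W1 1|mH] - μ[W1 0|mH] :=
        condExp_sub (hW1int 1 le_rfl) (hW1int 0 (by norm_num)) mH
      calc ∫ ω in ((fun ω => (S ω, G ω)) ⁻¹' {(s, g)}), (Ypo 1 g ω - Ypo 0 g ω) ∂μ
          = (∫ ω in ((fun ω => (S ω, G ω)) ⁻¹' {(s, g)}), Ypo 1 g ω ∂μ)
            - ∫ ω in ((fun ω => (S ω, G ω)) ⁻¹' {(s, g)}), Ypo 0 g ω ∂μ :=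
            integral_sub ((hYint 1 le_rfl g hg).integrableOn)
              ((hYint 0 (by norm_num) g hg).integrableOn)
        _ = (∫ ω, (μ[ind ((fun ω => (S ω, G ω)) ⁻¹' {(s, g)})|mH]) ω * (μ[Ypo 1 g|mH]) ω ∂μ)
            - ∫ ω, (μ[ind ((fun ω => (S ω, G ω)) ⁻¹' {(s, g)})|mH]) ω * (μ[Ypo 0 g|mH]) ω ∂μ := by
            rw [h1, h0, hma 1 le_rfl, hma 0 (by norm_num)]
        _ = ∫ ω, ((μ[ind ((fun ω => (S ω, G ω)) ⁻¹' {(s, g)})|mH]) ω * (μ[Ypo 1 g|mH]) ω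
            - (μ[ind ((fun ω => (S ω, G ω)) ⁻¹' {(s, g)})|mH]) ω * (μ[Ypo 0 g|mH]) ω) ∂μ :=
            (integral_sub hint1 hint0).symm
        _ = ∫ ω, (μ[ind ((fun ω => (S ω, G ω)) ⁻¹' {(s, g)})|mH]) ω
              * (μ[fun ω => W1 1 ω - W1 0 ω|mH]) ω ∂μ := by
            refine integral_congr_ae ?_
            filter_upwards [hE 1 le_rfl g hg, hE 0 (by norm_num) g hg, hmsub]
              with ω e1 e0 em
            simp only [Pi.sub_apply] at em
            rw [e1, e0, em]; ring
    -- sum of the conditional probabilities equals the population probability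
    have hsum : (fun ω => ∑ g ∈ Finset.range (gmax + 1),
        (μ[ind ((fun ω => (S ω, G ω)) ⁻¹' {(s, g)})|mH]) ω)
          =ᵐ[μ] fun _ => (μ {ω | S ω = s}).toReal := by
      have hsum1 := condExp_finset_sum (μ := μ) (m := mH)
        (s := Finset.range (gmax + 1))
        (f := fun g => ind ((fun ω => (S ω, G ω)) ⁻¹' {(s, g)}))
        (fun g _ => integrable_ind (hBmeas g))
      have h2 : (∑ g ∈ Finset.range (gmax + 1), ind ((fun ω => (S ω, G ω)) ⁻¹' {(s, g)}))
          = ind {ω | S ω = s} := by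
        funext ω
        rw [Finset.sum_apply]
        have hterm : ∀ g : ℕ, ind ((fun ω => (S ω, G ω)) ⁻¹' {(s, g)}) ω
            = ind {ω' | S ω' = s} ω * (if G ω = g then (1 : ℝ) else 0) := by
          intro g
          rw [hBeq g]
          by_cases h1 : S ω = s <;> by_cases h2 : G ω = g <;> simp [ind, h1, h2]
        simp only [hterm, ← Finset.mul_sum]
        rw [Finset.sum_ite_eq (Finset.range (gmax + 1)) (G ω) (fun _ => (1 : ℝ)),
          if_pos (Finset.mem_range_succ_iff.mpr (hG ω)), mul_one]
      have h3 : μ[ind {ω | S ω = s}|mH] =ᵐ[μ] fun _ => (μ {ω | S ω = s}).toReal := by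
        have hmemS : MeasurableSet[MeasurableSpace.comap S inferInstance] {ω | S ω = s} :=
          ⟨{s}, measurableSet_singleton s, by ext ω; simp [Set.mem_preimage]⟩
        have hSB : StronglyMeasurable[MeasurableSpace.comap S inferInstance]
            (ind {ω | S ω = s}) := stronglyMeasurable_const.indicator hmemS
        have h4 := condExp_indep_eq (μ := μ) hSmeas.comap_le hH hSB hSH
        refine h4.trans (Filter.EventuallyEq.of_eq ?_)
        funext _
        exact integral_indicator_one hSset
      have h5 : μ[∑ g ∈ Finset.range (gmax + 1),
          ind ((fun ω => (S ω, G ω)) ⁻¹' {(s, g)})|mH]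
            =ᵐ[μ] fun _ => (μ {ω | S ω = s}).toReal := by rw [h2]; exact h3
      have h6 : (fun ω => ∑ g ∈ Finset.range (gmax + 1),
          (μ[ind ((fun ω => (S ω, G ω)) ⁻¹' {(s, g)})|mH]) ω)
            = (∑ g ∈ Finset.range (gmax + 1),
              μ[ind ((fun ω => (S ω, G ω)) ⁻¹' {(s, g)})|mH]) := by
        funext ω; rw [Finset.sum_apply]
      rw [h6]
      exact hsum1.symm.trans h5
    -- put everything together
    calc ∫ ω in {ω | S ω = s}, (Ya 1 ω - Ya 0 ω) ∂μ
        = ∫ ω in {ω | S ω = s}, (∑ g ∈ Finset.range (gmax + 1),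
            ({ω' | G ω' = g}.indicator (fun ω' => Ypo 1 g ω' - Ypo 0 g ω')) ω) ∂μ := by
          refine integral_congr_ae (Filter.Eventually.of_forall fun ω => ?_)
          show Ya 1 ω - Ya 0 ω = _
          rw [hYa 1 ω, hYa 0 ω, ← Finset.sum_sub_distrib]
          refine Finset.sum_congr rfl fun g _ => ?_
          by_cases h : G ω = g <;> simp [ind, h, Set.indicator, Set.mem_setOf_eq]
      _ = ∑ g ∈ Finset.range (gmax + 1), ∫ ω in {ω | S ω = s},
            ({ω' | G ω' = g}.indicator (fun ω' => Ypo 1 g ω' - Ypo 0 g ω')) ω ∂μ :=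
          integral_finset_sum _ (fun g hg =>
            (((hYint 1 le_rfl g (Finset.mem_range_succ_iff.mp hg)).sub
              (hYint 0 (by norm_num) g (Finset.mem_range_succ_iff.mp hg))).indicator
              (hGset g)).integrableOn)
      _ = ∑ g ∈ Finset.range (gmax + 1), ∫ ω in {ω | S ω = s} ∩ {ω' | G ω' = g},
            (Ypo 1 g ω - Ypo 0 g ω) ∂μ :=
          Finset.sum_congr rfl fun g _ => setIntegral_indicator (hGset g)
      _ = ∑ g ∈ Finset.range (gmax + 1),
            ∫ ω, (μ[ind ((fun ω => (S ω, G ω)) ⁻¹' {(s, g)})|mH]) ω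
              * (μ[fun ω => W1 1 ω - W1 0 ω|mH]) ω ∂μ := by
          refine Finset.sum_congr rfl fun g hg => ?_
          rw [← hBeq g]
          exact hkey g (Finset.mem_range_succ_iff.mp hg)
      _ = ∫ ω, (∑ g ∈ Finset.range (gmax + 1),
            (μ[ind ((fun ω => (S ω, G ω)) ⁻¹' {(s, g)})|mH]) ω)
              * (μ[fun ω => W1 1 ω - W1 0 ω|mH]) ω ∂μ := by
          rw [← integral_finset_sum _ (fun g _ =>
            integrable_mul_aebdd (hκmeas g) (hκ0 g) (hκ1 g) hm_int)]
          refine integral_congr_ae (Filter.Eventually.of_forall fun ω => ?_)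
          dsimp only
          rw [Finset.sum_mul]
      _ = ∫ ω, (μ {ω | S ω = s}).toReal * (μ[fun ω => W1 1 ω - W1 0 ω|mH]) ω ∂μ := by
          refine integral_congr_ae ?_
          filter_upwards [hsum] with ω h
          rw [h]
      _ = (μ {ω | S ω = s}).toReal * ∫ ω, (μ[fun ω => W1 1 ω - W1 0 ω|mH]) ω ∂μ :=
          integral_const_mul _ _
      _ = (μ {ω | S ω = s}).toReal * ∫ ω, (W1 1 ω - W1 0 ω) ∂μ := by
          rw [integral_condExp hH]
  -- conclude
  have hfin : ∀ s : ℕ, μ {ω | S ω = s} ≠ 0 →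
      ∫ ω, (Ya 1 ω - Ya 0 ω) ∂(μ[|{ω | S ω = s}]) = ∫ ω, (W1 1 ω - W1 0 ω) ∂μ := by
    intro s hs0
    rw [ProbabilityTheory.cond, integral_smul_measure, main s, ENNReal.toReal_inv, smul_eq_mul,
      ← mul_assoc, inv_mul_cancel₀ (ENNReal.toReal_ne_zero.mpr ⟨hs0, measure_ne_top μ _⟩),
      one_mul]
  rw [hfin 1 (hSpos 1 (Or.inl rfl)).ne', hfin 2 (hSpos 2 (Or.inr rfl)).ne']
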